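/- arXiv:2307.12331 — 2 statements merged into one kernel-verified Lean document; each statement's English description precedes it below -/
import Mathlib

section
/- Let u and v be freely reduced words in the letters A ∪ A^{-1}, and let w be the unique reduced word representing the element uv of the free group F_g. Then |w|_{g+1}^{simple} ≤ |u|_{g+1}^{simple} + |v|_{g+1}^{simple} + 1. -/
/-- A letter of the alphabet `A ∪ A⁻¹`: a generator index together with a sign. -/
abbrev Letter (g : ℕ) := Fin g × Bool

/-- The formal inverse of a letter. -/
def Letter.inv {g : ℕ} (a : Letter g) : Letter g := (a.1, !a.2)

/-- A word is (freely) reduced if it equals its free reduction. -/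
def IsReducedWord {g : ℕ} (w : List (Letter g)) : Prop :=
  FreeGroup.reduce w = w

/-- The Whitehead graph of a word `x`: vertices are the letters `A ∪ A⁻¹`, and each
pair of consecutive letters `a b` occurring in `x` contributes an edge from `a` to `b⁻¹`. -/
def whiteheadGraph (g : ℕ) (x : List (Letter g)) : SimpleGraph (Letter g) where
  Adj u v := u ≠ v ∧ ([u, Letter.inv v] <:+: x ∨ [v, Letter.inv u] <:+: x)
  symm := by
    constructor
    intro u v h
    exact ⟨Ne.symm h.1, h.2.symm⟩
  loopless := by
    constructor
    intro u h
    exact h.1 rfl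

/-- A graph has a cut vertex if it is disconnected, or some vertex can be removed to
disconnect it. -/
def HasCutVertex {V : Type*} (G : SimpleGraph V) : Prop :=
  ¬ G.Connected ∨ ∃ v : V, ¬ (G.induce {u | u ≠ v}).Connected

/-- The simple `(g+1)`-length of a reduced word `w`: it is `0` if the Whitehead graph of
`w` has a cut vertex, and otherwise the greatest `t` such that `w` is a concatenation of
`t` subwords each of whose Whitehead graphs has no cut vertex. -/
noncomputable def simpleLength (g : ℕ) (w : List (Letter g)) : ℕ :=
  letI := Classical.propDecidable (HasCutVertex (whiteheadGraph g w))
  if HasCutVertex (whiteheadGraph g w) then 0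
  else sSup {t : ℕ | ∃ ws : List (List (Letter g)),
    ws.length = t ∧ ws.flatten = w ∧
    ∀ u ∈ ws, ¬ HasCutVertex (whiteheadGraph g u)}

/- ## auxiliary lemmas -/


lemma wh_mono {g : ℕ} {x y : List (Letter g)} (h : x <:+: y) :
    whiteheadGraph g x ≤ whiteheadGraph g y := by
  intro a b hab
  exact ⟨hab.1, hab.2.imp (fun h' => h'.trans h) (fun h' => h'.trans h)⟩

lemma notCut_mono {g : ℕ} {x y : List (Letter g)} (h : x <:+: y)
    (hx : ¬ HasCutVertex (whiteheadGraph g x)) : ¬ HasCutVertex (whiteheadGraph g y) := by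
  rw [HasCutVertex] at hx ⊢
  push_neg at hx ⊢
  obtain ⟨h1, h2⟩ := hx
  refine ⟨h1.mono (wh_mono h), fun v => (h2 v).mono ?_⟩
  intro a b hab
  exact wh_mono h hab

lemma wh_small {g : ℕ} (hg : 2 ≤ g) {x : List (Letter g)} (hx : x.length ≤ 1) :
    HasCutVertex (whiteheadGraph g x) := by
  have hbot : whiteheadGraph g x = ⊥ := by
    have : ∀ a b : Letter g, ¬ (whiteheadGraph g x).Adj a b := by
      rintro a b ⟨_, h | h⟩ <;>
        · have := h.length_le
          simp at this
          omega
    ext a b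
    simp [this a b]
  left
  rw [hbot]
  haveI : Nontrivial (Letter g) :=
    ⟨(⟨0, by omega⟩, true), (⟨0, by omega⟩, false), by simp⟩
  exact SimpleGraph.not_connected_bot

lemma piece_ne_nil {g : ℕ} (hg : 2 ≤ g) {x : List (Letter g)}
    (hx : ¬ HasCutVertex (whiteheadGraph g x)) : x ≠ [] := by
  intro h
  exact hx (wh_small hg (by simp [h]))

lemma length_le_flatten {α : Type*} :
    ∀ ws : List (List α), (∀ x ∈ ws, x ≠ []) → ws.length ≤ ws.flatten.length := by
  intro ws
  induction ws with
  | nil => simp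
  | cons m t ih =>
    intro h
    have hm : m ≠ [] := h m (by simp)
    have : 1 ≤ m.length := List.length_pos_iff.mpr hm
    have := ih (fun x hx => h x (by simp [hx]))
    simp only [List.length_cons, List.flatten_cons, List.length_append]
    omega


section RedAux
open FreeGroup
variable {α : Type*} [DecidableEq α]

lemma reduce_tail {a : α × Bool} {L : List (α × Bool)}
    (h : reduce (a :: L) = a :: L) : reduce L = L := by
  rw [FreeGroup.reduce.cons] at h
  rcases hL : FreeGroup.reduce L with _ | ⟨y, L'⟩
  · rw [hL] at h
    simp only [List.cons.injEq] at h
    exact h.2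
  · rw [hL] at h
    by_cases hc : a.1 = y.1 ∧ a.2 = !y.2
    · simp only [hc, if_true, and_self] at h
      have hlen := (FreeGroup.Red.length_le (reduce.red (L := L)))
      rw [hL] at hlen
      have := congrArg List.length h
      simp at this hlen
      omega
    · simp only [hc, if_false] at h
      have h' : y :: L' = L := by simpa using h
      exact h'

lemma reduced_no_cancel {a b : α × Bool} {L : List (α × Bool)}
    (h : reduce (a :: b :: L) = a :: b :: L) : ¬ (a.1 = b.1 ∧ a.2 = !b.2) := by
  intro hc
  have hb : reduce (b :: L) = b :: L := reduce_tail h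
  rw [FreeGroup.reduce.cons, hb] at h
  simp only [hc, and_self, if_true] at h
  have := congrArg List.length h
  simp at this
  omega

lemma reduce_append : ∀ (u v : List (α × Bool)), reduce u = u → reduce v = v →
    ∃ u₁ v₁, u₁ <+: u ∧ v₁ <:+ v ∧ reduce (u ++ v) = u₁ ++ v₁ := by
  intro u
  induction u with
  | nil =>
    intro v _ hv
    exact ⟨[], v, List.prefix_refl _, List.suffix_refl _, by simpa using hv⟩
  | cons a u' ih =>
    intro v hu hv
    obtain ⟨u₁', v₁', hp, hs, hr⟩ := ih v (reduce_tail hu) hv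
    rw [List.cons_append, FreeGroup.reduce.cons, hr]
    cases u₁' with
    | nil =>
      simp only [List.nil_append]
      cases v₁' with
      | nil =>
        exact ⟨[a], [], ⟨u', rfl⟩, List.nil_suffix, by simp⟩
      | cons c t =>
        by_cases hc : a.1 = c.1 ∧ a.2 = !c.2
        · refine ⟨[], t, List.nil_prefix, ?_, by simp [hc]⟩
          exact (List.suffix_cons c t).trans hs
        · exact ⟨[a], c :: t, ⟨u', rfl⟩, hs, by simp [hc]⟩
    | cons b r =>
      obtain ⟨s, hs2⟩ := hp
      have hu'' : u' = b :: (r ++ s) := by rw [← hs2]; rfl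
      have hu2 : reduce (a :: b :: (r ++ s)) = a :: b :: (r ++ s) := by
        rw [← hu'']; exact hu
      have hnc : ¬ (a.1 = b.1 ∧ a.2 = !b.2) := reduced_no_cancel hu2
      refine ⟨a :: b :: r, v₁', ⟨s, by rw [← hs2]; rfl⟩, hs, ?_⟩
      simp only [List.cons_append]
      simp [hnc]

end RedAux

lemma flatten_split {α : Type*} :
    ∀ (ws : List (List α)) (a b : List α), ws.flatten = a ++ b →
    ∃ ws₁ ws₂ : List (List α), ws₁.flatten <+: a ∧ ws₂.flatten <:+ b ∧
      (∀ x ∈ ws₁, x ∈ ws) ∧ (∀ x ∈ ws₂, x ∈ ws) ∧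
      ws.length ≤ ws₁.length + ws₂.length + 1 := by
  intro ws
  induction ws with
  | nil =>
    intro a b _
    exact ⟨[], [], List.nil_prefix, List.nil_suffix, by simp, by simp, by simp⟩
  | cons m ws' ih =>
    intro a b h
    simp only [List.flatten_cons] at h
    rcases List.append_eq_append_iff.mp h with ⟨r, ha, hf⟩ | ⟨c', hm, hb⟩
    · obtain ⟨ws₁, ws₂, hp, hs, hm1, hm2, hl⟩ := ih r b hf
      obtain ⟨tl, htl⟩ := hp
      refine ⟨m :: ws₁, ws₂, ⟨tl, ?_⟩, hs, ?_, ?_, ?_⟩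
      · rw [ha, List.flatten_cons, List.append_assoc, htl]
      · intro x hx
        rcases List.mem_cons.mp hx with rfl | hx
        · exact List.mem_cons_self
        · exact List.mem_cons_of_mem _ (hm1 x hx)
      · exact fun x hx => List.mem_cons_of_mem _ (hm2 x hx)
      · simp only [List.length_cons]; omega
    · refine ⟨[], ws', List.nil_prefix, ⟨c', hb.symm⟩, by simp, ?_, by simp⟩
      exact fun x hx => List.mem_cons_of_mem _ hx

lemma simpleLength_bddAbove (g : ℕ) (hg : 2 ≤ g) (w : List (Letter g)) :
    BddAbove {t : ℕ | ∃ ws : List (List (Letter g)),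
      ws.length = t ∧ ws.flatten = w ∧
      ∀ u ∈ ws, ¬ HasCutVertex (whiteheadGraph g u)} := by
  refine ⟨w.length, ?_⟩
  rintro t ⟨ws, rfl, hfl, hall⟩
  rw [← hfl]
  exact length_le_flatten ws (fun x hx => piece_ne_nil hg (hall x hx))

lemma le_simpleLength_of_prefix (g : ℕ) (hg : 2 ≤ g) (u : List (Letter g))
    (ws : List (List (Letter g))) (hpre : ws.flatten <+: u)
    (hall : ∀ x ∈ ws, ¬ HasCutVertex (whiteheadGraph g x)) :
    ws.length ≤ simpleLength g u := by
  rcases List.eq_nil_or_concat ws with rfl | ⟨ws', last, hws⟩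
  · simp
  rw [List.concat_eq_append] at hws
  subst hws
  obtain ⟨s, hsu⟩ := hpre
  have hlast : ¬ HasCutVertex (whiteheadGraph g last) := hall last (by simp)
  have hlastu : last <:+: u := ⟨ws'.flatten, s, by rw [← hsu]; simp⟩
  have hucut : ¬ HasCutVertex (whiteheadGraph g u) := notCut_mono hlastu hlast
  rw [simpleLength, if_neg hucut]
  apply le_csSup (simpleLength_bddAbove g hg u)
  refine ⟨ws' ++ [last ++ s], by simp, ?_, ?_⟩
  · rw [← hsu]; simp
  · intro x hx
    rcases List.mem_append.mp hx with hx | hx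
    · exact hall x (List.mem_append.mpr (Or.inl hx))
    · rw [List.mem_singleton] at hx
      subst hx
      exact notCut_mono ⟨[], s, by simp⟩ hlast

lemma le_simpleLength_of_suffix (g : ℕ) (hg : 2 ≤ g) (v : List (Letter g))
    (ws : List (List (Letter g))) (hsuf : ws.flatten <:+ v)
    (hall : ∀ x ∈ ws, ¬ HasCutVertex (whiteheadGraph g x)) :
    ws.length ≤ simpleLength g v := by
  cases ws with
  | nil => simp
  | cons hd tl =>
    obtain ⟨s, hsv⟩ := hsuf
    have hhd : ¬ HasCutVertex (whiteheadGraph g hd) := hall hd (by simp)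
    have hhdv : hd <:+: v := ⟨s, tl.flatten, by rw [← hsv]; simp⟩
    have hvcut : ¬ HasCutVertex (whiteheadGraph g v) := notCut_mono hhdv hhd
    rw [simpleLength, if_neg hvcut]
    apply le_csSup (simpleLength_bddAbove g hg v)
    refine ⟨(s ++ hd) :: tl, by simp, ?_, ?_⟩
    · rw [← hsv]; simp
    · intro x hx
      rcases List.mem_cons.mp hx with rfl | hx
      · exact notCut_mono ⟨s, [], by simp⟩ hhd
      · exact hall x (List.mem_cons_of_mem _ hx)

/-- If `u, v` are freely reduced words and `w` is the unique reduced word representing the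
element `uv` of `F_g`, then `|w|ₛ ≤ |u|ₛ + |v|ₛ + 1`. -/
theorem simpleLength_mul_le (g : ℕ) (hg : 2 ≤ g)
    (u v : List (Letter g)) (hu : IsReducedWord u) (hv : IsReducedWord v) :
    simpleLength g (FreeGroup.reduce (u ++ v)) ≤
      simpleLength g u + simpleLength g v + 1 := by
  set w := FreeGroup.reduce (u ++ v) with hw
  by_cases hcut : HasCutVertex (whiteheadGraph g w)
  · rw [simpleLength, if_pos hcut]; omega
  · rw [simpleLength, if_neg hcut]
    obtain ⟨u₁, v₁, hpu, hsv, hred⟩ := reduce_append u v hu hv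
    apply csSup_le
    · exact ⟨1, [w], rfl, by simp, by simpa using hcut⟩
    rintro t ⟨ws, rfl, hfl, hall⟩
    have hflat : ws.flatten = u₁ ++ v₁ := by rw [hfl, hw, hred]
    obtain ⟨ws₁, ws₂, hp1, hs2, hm1, hm2, hle⟩ := flatten_split ws u₁ v₁ hflat
    have h1 : ws₁.length ≤ simpleLength g u :=
      le_simpleLength_of_prefix g hg u ws₁ (hp1.trans hpu) (fun x hx => hall x (hm1 x hx))
    have h2 : ws₂.length ≤ simpleLength g v :=
      le_simpleLength_of_suffix g hg v ws₂ (hs2.trans hsv) (fun x hx => hall x (hm2 x hx))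
    omega
end

section
/- Let m ≥ 1 and let w_1, …, w_m be freely reduced words in the letters A ∪ A^{-1} such that for each j the Whitehead graph Γ_A(w_j) has a cut vertex (equivalently, |w_j|_{g+1}^{simple} = 0). Then the unique reduced word w representing the product w_1 w_2 ⋯ w_m in the free group F_g satisfies |w|_{g+1}^{simple} ≤ m − 1. -/
namespace SLAux

variable {g : ℕ}


def NoPair (L : List (Letter g)) : Prop :=
  ∀ (L₁ L₂ : List (Letter g)) (a : Letter g), L ≠ L₁ ++ a :: Letter.inv a :: L₂

lemma noPair_of_reduced {L : List (Letter g)} (h : IsReducedWord L) : NoPair L := by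
  intro L₁ L₂ a hEq
  have h2 : FreeGroup.reduce L = L₁ ++ (a.1, a.2) :: (a.1, !a.2) :: L₂ := by
    rw [h, hEq]; rfl
  exact FreeGroup.reduce.not h2

lemma reduced_of_noPair {L : List (Letter g)} (h : NoPair L) : IsReducedWord L := by
  induction L with
  | nil => rfl
  | cons a t ih =>
    have ht : NoPair t := fun L₁ L₂ b hEq => h (a :: L₁) L₂ b (by rw [hEq]; rfl)
    have hred : FreeGroup.reduce t = t := ih ht
    unfold IsReducedWord
    rw [FreeGroup.reduce.cons, hred]
    cases t with
    | nil => rfl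
    | cons b t' =>
      show (if a.1 = b.1 ∧ a.2 = !b.2 then t' else a :: b :: t') = a :: b :: t'
      rw [if_neg]
      rintro ⟨h1, h2⟩
      refine h [] t' a ?_
      have hb : b = Letter.inv a := by
        have : b.2 = !a.2 := by simp [h2]
        exact Prod.ext h1.symm this
      rw [hb]; rfl

lemma reduce_append : ∀ (n : ℕ) (x y : List (Letter g)), x.length ≤ n →
    IsReducedWord x → IsReducedWord y →
    ∃ x' y', x' <+: x ∧ y' <:+ y ∧ FreeGroup.reduce (x ++ y) = x' ++ y' := by
  intro n
  induction n with
  | zero =>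
    intro x y hl hx hy
    have hxe : x = [] := List.eq_nil_of_length_eq_zero (Nat.le_zero.mp hl)
    subst hxe
    exact ⟨[], y, List.nil_prefix, List.suffix_refl y, by simp only [List.nil_append]; exact hy⟩
  | succ n ih =>
    intro x y hl hx hy
    by_cases hp : ∃ (a : Letter g) (L₁ L₂ : List (Letter g)), x ++ y = L₁ ++ a :: Letter.inv a :: L₂
    · obtain ⟨a, L₁, L₂, hEq⟩ := hp
      rcases List.append_eq_append_iff.mp hEq with ⟨a', h1, h2⟩ | ⟨c', h1, h2⟩
      · -- L₁ = x ++ a' and y = a' ++ a :: inv a :: L₂ : pair inside y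
        exact absurd h2 (noPair_of_reduced hy (a' ) L₂ a)
      · -- x = L₁ ++ c' and a :: inv a :: L₂ = c' ++ y
        cases c' with
        | nil =>
          exact absurd h2.symm (noPair_of_reduced hy [] L₂ a)
        | cons e c1 =>
          obtain ⟨he, h3⟩ : e = a ∧ Letter.inv a :: L₂ = c1 ++ y := by
            injection h2 with u1 u2; exact ⟨u1.symm, u2⟩
          subst he
          cases c1 with
          | nil =>
            -- junction case: y = inv e :: L₂, x = L₁ ++ [e]
            have hy2 : Letter.inv e :: L₂ = y := by simpa using h3
            have hxL : x = L₁ ++ [e] := h1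
            have hL1red : IsReducedWord L₁ := by
              apply reduced_of_noPair
              intro M₁ M₂ b hEqb
              refine noPair_of_reduced hx M₁ (M₂ ++ [e]) b ?_
              rw [hxL, hEqb]; simp
            have hL2red : IsReducedWord L₂ := by
              apply reduced_of_noPair
              intro M₁ M₂ b hEqb
              refine noPair_of_reduced hy (Letter.inv e :: M₁) M₂ b ?_
              rw [← hy2, hEqb]; rfl
            have hstep : FreeGroup.Red.Step (L₁ ++ e :: Letter.inv e :: L₂) (L₁ ++ L₂) := by
              have hs := @FreeGroup.Red.Step.not (Fin g) L₁ L₂ e.1 e.2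
              simpa [Letter.inv] using hs
            have hre : FreeGroup.reduce (x ++ y) = FreeGroup.reduce (L₁ ++ L₂) := by
              rw [hEq]; exact FreeGroup.reduce.Step.eq hstep
            have hlen : L₁.length ≤ n := by
              have hxl : x.length = L₁.length + 1 := by rw [hxL]; simp
              omega
            obtain ⟨x', y', hx', hy', he⟩ := ih L₁ L₂ hlen hL1red hL2red
            refine ⟨x', y', hx'.trans ⟨[e], hxL.symm⟩, hy'.trans ?_, by rw [hre, he]⟩
            exact ⟨[Letter.inv e], hy2⟩
          | cons f c2 =>
            exfalso
            obtain ⟨hf, hc⟩ : f = Letter.inv e ∧ L₂ = c2 ++ y := by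
              injection h3 with u1 u2; exact ⟨u1.symm, u2⟩
            subst hf
            exact noPair_of_reduced hx L₁ c2 e h1
    · have : NoPair (x ++ y) := fun L₁ L₂ a hEq => hp ⟨a, L₁, L₂, hEq⟩
      exact ⟨x, y, List.prefix_refl x, List.suffix_refl y, reduced_of_noPair this⟩

lemma nil_forall₂ (l : List (List (Letter g))) :
    List.Forall₂ (· <+: ·) (l.map fun _ => ([] : List (Letter g))) l := by
  induction l with
  | nil => exact .nil
  | cons u l ih => exact .cons List.nil_prefix ih

lemma prefix_flatten : ∀ (l : List (List (Letter g))) (p : List (Letter g)),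
    p <+: l.flatten → ∃ l', List.Forall₂ (· <+: ·) l' l ∧ l'.flatten = p := by
  intro l
  induction l with
  | nil =>
    intro p hp
    have : p = [] := List.prefix_nil.mp (by simpa using hp)
    subst this
    exact ⟨[], .nil, rfl⟩
  | cons u l ih =>
    intro p hp
    rw [List.flatten_cons] at hp
    obtain ⟨q, hq⟩ := hp
    rcases List.append_eq_append_iff.mp hq with ⟨a', h1, h2⟩ | ⟨c', h1, h2⟩
    · refine ⟨p :: l.map fun _ => [], .cons ⟨a', h1.symm⟩ (nil_forall₂ l), ?_⟩
      simp
    · obtain ⟨l'', hf, hfl⟩ := ih c' ⟨q, h2.symm⟩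
      exact ⟨u :: l'', .cons (List.prefix_refl u) hf, by simp [hfl, h1]⟩

lemma forall₂_comp {l₁ l₂ l₃ : List (List (Letter g))}
    (h1 : List.Forall₂ (· <+: ·) l₁ l₂)
    (h2 : List.Forall₂ (fun u w => u <:+: w) l₂ l₃) :
    List.Forall₂ (fun u w => u <:+: w) l₁ l₃ := by
  induction h2 generalizing l₁ with
  | nil => cases h1; exact .nil
  | cons hr _ ih =>
    cases h1 with
    | cons hp hf => exact .cons (hp.isInfix.trans hr) (ih hf)

lemma reduce_flatten (ws : List (List (Letter g))) (h : ∀ w ∈ ws, IsReducedWord w) :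
    ∃ us, List.Forall₂ (fun u w => u <:+: w) us ws ∧
      us.flatten = FreeGroup.reduce ws.flatten := by
  induction ws using List.reverseRecOn with
  | nil => exact ⟨[], .nil, rfl⟩
  | append_singleton ws₀ y ihw =>
    obtain ⟨us₀, hf, hflat⟩ := ihw (fun w hw => h w (by simp [hw]))
    have hyred : IsReducedWord y := h y (by simp)
    have hx : IsReducedWord us₀.flatten := by
      unfold IsReducedWord; rw [hflat]; exact FreeGroup.reduce.idem
    obtain ⟨x', y', hx', hy', he⟩ :=
      reduce_append us₀.flatten.length us₀.flatten y le_rfl hx hyred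
    have h1 : FreeGroup.reduce ((ws₀ ++ [y]).flatten) = x' ++ y' := by
      have hr : FreeGroup.Red (ws₀.flatten ++ y) (us₀.flatten ++ y) := by
        rw [hflat]
        exact FreeGroup.Red.append_append FreeGroup.reduce.red FreeGroup.Red.refl
      rw [List.flatten_append, List.flatten_singleton,
        FreeGroup.reduce.eq_of_red hr, he]
    obtain ⟨us₁, hf1, hflat1⟩ := prefix_flatten us₀ x' hx'
    refine ⟨us₁ ++ [y'], ?_, by rw [h1]; simp [hflat1]⟩
    exact List.rel_append (forall₂_comp hf1 hf) (List.Forall₂.cons hy'.isInfix List.Forall₂.nil)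

lemma graph_mono {x y : List (Letter g)} (h : x <:+: y) :
    whiteheadGraph g x ≤ whiteheadGraph g y := by
  intro u v huv
  exact ⟨huv.1, huv.2.imp (fun h' => h'.trans h) (fun h' => h'.trans h)⟩

lemma hasCut_anti {G H : SimpleGraph (Letter g)} (hle : G ≤ H)
    (h : HasCutVertex H) : HasCutVertex G := by
  rcases h with h | ⟨v, hv⟩
  · exact Or.inl fun hc => h (hc.mono hle)
  · exact Or.inr ⟨v, fun hc => hv (hc.mono fun a b hab => hle hab)⟩

lemma cut_nil (hg : 2 ≤ g) : HasCutVertex (whiteheadGraph g ([] : List (Letter g))) := by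
  left
  intro hc
  have hle : whiteheadGraph g ([] : List (Letter g)) ≤ (⊥ : SimpleGraph (Letter g)) := by
    intro a b hab
    rcases hab.2 with h | h <;> simp [List.infix_nil] at h
  have h0 : (0 : ℕ) < g := by omega
  have hreach := hc.preconnected (⟨0, h0⟩, true) (⟨0, h0⟩, false)
  have := (hreach.mono hle)
  rw [SimpleGraph.reachable_bot] at this
  simp at this

def Bad (x : List (Letter g)) : Prop :=
  ∀ z, z <:+: x → HasCutVertex (whiteheadGraph g z)

lemma count (hg : 2 ≤ g) : ∀ (us : List (List (Letter g))) (r : List (Letter g))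
    (zs : List (List (Letter g))),
    (∀ u ∈ us, Bad u) → (∀ z ∈ zs, ¬ HasCutVertex (whiteheadGraph g z)) →
    r ++ zs.flatten = us.flatten → zs.length ≤ us.length - 1 := by
  intro us
  induction us with
  | nil =>
    intro r zs _ hz hEq
    have hfl : zs.flatten = [] := (List.append_eq_nil_iff.mp (by simpa using hEq)).2
    rcases zs with _ | ⟨z, zs'⟩
    · simp
    · exfalso
      apply hz z (by simp)
      have hznil : z = [] := List.flatten_eq_nil_iff.mp hfl z (by simp)
      rw [hznil]; exact cut_nil hg
  | cons u us' ih =>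
    intro r zs hu hz hEq
    rw [List.flatten_cons] at hEq
    rcases List.append_eq_append_iff.mp hEq with ⟨s, h1, h2⟩ | ⟨c', h1, h2⟩
    · -- u = r ++ s, zs.flatten = s ++ us'.flatten
      rcases zs with _ | ⟨z, zs'⟩
      · simp
      · rw [List.flatten_cons] at h2
        rcases List.append_eq_append_iff.mp h2 with ⟨a', h3, h4⟩ | ⟨c'', h3, h4⟩
        · -- s = z ++ a' : z is a prefix of s, hence infix of u
          exfalso
          apply hz z (by simp)
          apply hu u (by simp)
          have hzp : z <+: s := ⟨a', h3.symm⟩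
          have hsu : s <:+: u := ⟨r, [], by simp [h1]⟩
          exact hzp.isInfix.trans hsu
        · -- z = s ++ c'', us'.flatten = c'' ++ zs'.flatten
          rcases c'' with _ | ⟨f, c₂⟩
          · -- c'' = [] : z = s, infix of u
            exfalso
            apply hz z (by simp)
            apply hu u (by simp)
            have hzs : z = s := by simpa using h3
            have hsu : s <:+: u := ⟨r, [], by simp [h1]⟩
            exact hzs ▸ hsu
          · have hrec := ih (f :: c₂) zs' (fun v hv => hu v (List.mem_cons_of_mem u hv))
              (fun v hv => hz v (List.mem_cons_of_mem z hv)) h4.symm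
            have hne : us' ≠ [] := by
              intro hn
              rw [hn] at h4
              simp at h4
            have h1' : 1 ≤ us'.length := List.length_pos_iff.mpr hne
            simp only [List.length_cons]
            omega
    · -- r = u ++ c', us'.flatten = c' ++ zs.flatten
      have hrec := ih c' zs (fun v hv => hu v (List.mem_cons_of_mem u hv)) hz h2.symm
      simp only [List.length_cons]
      omega

lemma mem_of_forall₂ {R : List (Letter g) → List (Letter g) → Prop}
    {l₁ l₂ : List (List (Letter g))} (h : List.Forall₂ R l₁ l₂) :
    ∀ a ∈ l₁, ∃ b ∈ l₂, R a b := by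
  induction h with
  | nil => intro a ha; simp at ha
  | cons hr _ ih =>
    intro a ha
    rcases List.mem_cons.mp ha with rfl | ha
    · exact ⟨_, by simp, hr⟩
    · obtain ⟨b, hb, hab⟩ := ih a ha
      exact ⟨b, by simp [hb], hab⟩

end SLAux

/-- If `w_1, …, w_m` (`m ≥ 1`) are freely reduced words whose Whitehead graphs all have cut
vertices, then the unique reduced word `w` representing the product `w_1 w_2 ⋯ w_m` in `F_g`
satisfies `|w|ₛ ≤ m - 1`. -/
theorem simpleLength_prod_le (g : ℕ) (hg : 2 ≤ g) (m : ℕ) (hm : 1 ≤ m)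
    (ws : List (List (Letter g))) (hlen : ws.length = m)
    (hred : ∀ w ∈ ws, IsReducedWord w)
    (hcut : ∀ w ∈ ws, HasCutVertex (whiteheadGraph g w)) :
    simpleLength g (FreeGroup.reduce ws.flatten) ≤ m - 1 := by
  classical
  obtain ⟨us, hf, hflat⟩ := SLAux.reduce_flatten ws hred
  rw [simpleLength]
  split_ifs with h
  · exact Nat.zero_le _
  · apply csSup_le'
    rintro t ⟨zs, hzlen, hzflat, hz⟩
    have hbad : ∀ u ∈ us, SLAux.Bad u := by
      intro u hu z hzu
      obtain ⟨w, hw, huw⟩ := SLAux.mem_of_forall₂ hf u hu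
      exact SLAux.hasCut_anti (SLAux.graph_mono (hzu.trans huw)) (hcut w hw)
    have hcount := SLAux.count hg us [] zs hbad hz
      (by rw [List.nil_append, hzflat, hflat])
    have hlus : us.length = m := by rw [hf.length_eq, hlen]
    omega
end
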